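/- Let N ≥ 2 and ζ₁ < ζ₂ < ⋯ < ζ_{N+1} be real numbers; for j = 1,…,N set Ω_j = {x ∈ ℝ² : ζ_j < x₂ < ζ_{j+1}}. Let G : ℝ² × ℝ² → ℂ be a kernel, let f : ℝ² → ℂ be supported in {x : ζ₁ < x₂ < ζ_{N+1}}, and set f_j = f·1_{Ω_j}. Let f̄_j⁻ : ℝ² → ℂ (j = 2,…,N) satisfy: f̄_N⁻ = f_N; f̄_j⁻ is supported in the closure of Ω_j; and for every j = 3,…,N and every x with x₂ < ζ_{j−1}, ∫_{Ω_j} f̄_j⁻(y)G(x,y)dy = ∫_{Ω_{j−1}} (f̄_{j−1}⁻(y) − f_{j−1}(y))G(x,y)dy. Assume all functions y ↦ f̄_j⁻(y)G(x,y) and y ↦ f(y)G(x,y) occurring below are Bochner integrable. Then: (i) for every i = 3,…,N and every x ∈ Ω_{i−1}, ∫_{Ω_i} f̄_i⁻(y)G(x,y)dy = ∫_{{y : y₂ > ζ_i}} f(y)G(x,y)dy; and (ii) for every x ∈ Ω_1, ∫_{ℝ²} (f̄_2⁻(y) + f_1(y))·G(x,y)dy = ∫_{ℝ²} f(y)G(x,y)dy.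 -/
import Mathlib


open MeasureTheory

/-- The horizontal layer `Ω_j = {x ∈ ℝ² : ζ_j < x₂ < ζ_{j+1}}`. -/
def layer (ζ : ℕ → ℝ) (j : ℕ) : Set (ℝ × ℝ) := {x : ℝ × ℝ | ζ j < x.2 ∧ x.2 < ζ (j + 1)}

/-- The piece `f_j = f·1_{Ω_j}` of the source `f`. -/
noncomputable def piece (ζ : ℕ → ℝ) (f : ℝ × ℝ → ℂ) (j : ℕ) : ℝ × ℝ → ℂ :=
  (layer ζ j).indicator f

lemma measurableSet_layer (ζ : ℕ → ℝ) (j : ℕ) : MeasurableSet (layer ζ j) := by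
  have : layer ζ j = Prod.snd ⁻¹' Set.Ioo (ζ j) (ζ (j + 1)) := rfl
  rw [this]
  exact measurable_snd measurableSet_Ioo

lemma measurableSet_upper (c : ℝ) : MeasurableSet {y : ℝ × ℝ | c < y.2} := by
  have : {y : ℝ × ℝ | c < y.2} = Prod.snd ⁻¹' Set.Ioi c := rfl
  rw [this]; exact measurable_snd measurableSet_Ioi

lemma measurableSet_upper' (c : ℝ) : MeasurableSet {y : ℝ × ℝ | c ≤ y.2} := by
  have : {y : ℝ × ℝ | c ≤ y.2} = Prod.snd ⁻¹' Set.Ici c := rfl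
  rw [this]; exact measurable_snd measurableSet_Ici

lemma null_snd_eq (c : ℝ) : MeasureTheory.volume {y : ℝ × ℝ | y.2 = c} = 0 := by
  have h : {y : ℝ × ℝ | y.2 = c} = (Set.univ : Set ℝ) ×ˢ ({c} : Set ℝ) := by
    ext y
    exact ⟨fun h => ⟨Set.mem_univ _, h⟩, fun h => h.2⟩
  rw [h, MeasureTheory.Measure.volume_eq_prod, MeasureTheory.Measure.prod_prod]
  simp

lemma ae_upper_eq (c : ℝ) :
    ({y : ℝ × ℝ | c < y.2} : Set (ℝ × ℝ)) =ᵐ[MeasureTheory.volume]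
      {y : ℝ × ℝ | c ≤ y.2} := by
  rw [MeasureTheory.ae_eq_set]
  constructor
  · refine measure_mono_null (fun y hy => ?_) (null_snd_eq c)
    simp only [Set.mem_diff, Set.mem_setOf_eq] at hy ⊢
    exact absurd hy.1.le hy.2
  · refine measure_mono_null (fun y hy => ?_) (null_snd_eq c)
    simp only [Set.mem_diff, Set.mem_setOf_eq] at hy ⊢
    exact le_antisymm (not_lt.mp hy.2) hy.1

/-- Theorem 2.2(ii)–(iii) of the paper: after the downward source transfer steps, the `i`-th
subproblem solution equals, in the layer `Ω_{i-1}`, the field radiated by the part of the source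
above `ζ_i`, and the last subproblem solution reproduces the full field in `Ω_1`. -/
theorem stmt_4
    (N : ℕ) (hN : 2 ≤ N)
    (ζ : ℕ → ℝ) (hζ : ∀ j, 1 ≤ j → j ≤ N → ζ j < ζ (j + 1))
    (G : ℝ × ℝ → ℝ × ℝ → ℂ)
    (f : ℝ × ℝ → ℂ)
    (hf_supp : Function.support f ⊆ {x : ℝ × ℝ | ζ 1 < x.2 ∧ x.2 < ζ (N + 1)})
    (fbar : ℕ → ℝ × ℝ → ℂ)
    (hfbarN : fbar N = piece ζ f N)
    (hfbar_supp : ∀ j, 2 ≤ j → j ≤ N →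
      Function.support (fbar j) ⊆ closure (layer ζ j))
    (htransfer : ∀ j, 3 ≤ j → j ≤ N → ∀ x : ℝ × ℝ, x.2 < ζ (j - 1) →
      ∫ y in layer ζ j, fbar j y * G x y
        = ∫ y in layer ζ (j - 1), (fbar (j - 1) y - piece ζ f (j - 1) y) * G x y)
    (hint_fbar : ∀ j, 2 ≤ j → j ≤ N → ∀ x : ℝ × ℝ,
      Integrable (fun y => fbar j y * G x y))
    (hint_f : ∀ x : ℝ × ℝ, Integrable (fun y => f y * G x y)) :
    (∀ i, 3 ≤ i → i ≤ N → ∀ x ∈ layer ζ (i - 1),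
      ∫ y in layer ζ i, fbar i y * G x y
        = ∫ y in {y : ℝ × ℝ | ζ i < y.2}, f y * G x y)
    ∧ (∀ x ∈ layer ζ 1,
      ∫ y : ℝ × ℝ, (fbar 2 y + piece ζ f 1 y) * G x y
        = ∫ y : ℝ × ℝ, f y * G x y) := by
  -- f vanishes above ζ (N+1) and below ζ 1
  have hf0_top : ∀ y : ℝ × ℝ, ζ (N + 1) ≤ y.2 → f y = 0 := by
    intro y h
    by_contra hne
    exact absurd (hf_supp hne).2 (not_lt.mpr h)
  have hf0_bot : ∀ y : ℝ × ℝ, y.2 ≤ ζ 1 → f y = 0 := by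
    intro y h
    by_contra hne
    exact absurd (hf_supp hne).1 (not_lt.mpr h)
  -- pieces as indicators of the products
  have hpiece : ∀ j (x : ℝ × ℝ), (fun y => piece ζ f j y * G x y)
      = (layer ζ j).indicator (fun y => f y * G x y) := by
    intro j x
    funext y
    by_cases hy : y ∈ layer ζ j
    · simp [piece, Set.indicator_of_mem hy]
    · simp [piece, Set.indicator_of_notMem hy]
  -- the union identity
  have hunion : ∀ i (x : ℝ × ℝ), ζ i < ζ (i + 1) →
      (∫ y in layer ζ i, f y * G x y)
        + ∫ y in {y : ℝ × ℝ | ζ (i + 1) < y.2}, f y * G x y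
      = ∫ y in {y : ℝ × ℝ | ζ i < y.2}, f y * G x y := by
    intro i x hlt
    have h1 : (∫ y in {y : ℝ × ℝ | ζ (i + 1) < y.2}, f y * G x y)
        = ∫ y in {y : ℝ × ℝ | ζ (i + 1) ≤ y.2}, f y * G x y :=
      setIntegral_congr_set (ae_upper_eq (ζ (i + 1)))
    have hset : layer ζ i ∪ {y : ℝ × ℝ | ζ (i + 1) ≤ y.2} = {y : ℝ × ℝ | ζ i < y.2} := by
      ext y
      constructor
      · rintro (hy | hy)
        · exact hy.1
        · exact lt_of_lt_of_le hlt hy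
      · intro hy
        by_cases h2 : y.2 < ζ (i + 1)
        · exact Or.inl ⟨hy, h2⟩
        · exact Or.inr (not_lt.mp h2)
    have hdisj : Disjoint (layer ζ i) {y : ℝ × ℝ | ζ (i + 1) ≤ y.2} := by
      rw [Set.disjoint_left]
      intro y hy hy'
      exact absurd hy.2 (not_lt.mpr hy')
    rw [h1, ← setIntegral_union hdisj (measurableSet_upper' (ζ (i + 1)))
      ((hint_f x).integrableOn) ((hint_f x).integrableOn), hset]
  -- key claim, by downward induction
  have key : ∀ m i, i + m = N → 2 ≤ i → ∀ x : ℝ × ℝ, x.2 < ζ i →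
      ∫ y in layer ζ i, fbar i y * G x y
        = ∫ y in {y : ℝ × ℝ | ζ i < y.2}, f y * G x y := by
    intro m
    induction m with
    | zero =>
      intro i hi h2 x hx
      have hiN : i = N := by omega
      subst hiN
      have e1 : ∫ y in layer ζ i, fbar i y * G x y = ∫ y in layer ζ i, f y * G x y := by
        refine setIntegral_congr_fun (measurableSet_layer ζ i) (fun y hy => ?_)
        rw [hfbarN]
        simp [piece, Set.indicator_of_mem hy]
      rw [e1, ← integral_indicator (measurableSet_layer ζ i),
        ← integral_indicator (measurableSet_upper (ζ i))]
      congr 1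
      funext y
      by_cases h1 : ζ i < y.2
      · by_cases h2' : y.2 < ζ (i + 1)
        · rw [Set.indicator_of_mem (show y ∈ layer ζ i from ⟨h1, h2'⟩),
            Set.indicator_of_mem (show y ∈ {y : ℝ × ℝ | ζ i < y.2} from h1)]
        · have hf0 : f y = 0 := hf0_top y (not_lt.mp h2')
          have : y ∉ layer ζ i := fun h => absurd h.2 h2'
          simp [Set.indicator_of_notMem this,
            Set.indicator_of_mem (show y ∈ {y : ℝ × ℝ | ζ i < y.2} from h1), hf0]
      · have hn1 : y ∉ layer ζ i := fun h => h1 h.1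
        have hn2 : y ∉ {y : ℝ × ℝ | ζ i < y.2} := h1
        simp [Set.indicator_of_notMem hn1, Set.indicator_of_notMem hn2]
    | succ m ih =>
      intro i hi h2 x hx
      have hiN : i < N := by omega
      have hζi : ζ i < ζ (i + 1) := hζ i (by omega) (by omega)
      have hx' : x.2 < ζ (i + 1) := hx.trans hζi
      have htr := htransfer (i + 1) (by omega) (by omega) x (by simpa using hx)
      have hsimp : i + 1 - 1 = i := by omega
      rw [hsimp] at htr
      have hib : IntegrableOn (fun y => fbar i y * G x y) (layer ζ i) volume :=
        (hint_fbar i h2 hiN.le x).integrableOn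
      have hip : IntegrableOn (fun y => piece ζ f i y * G x y) (layer ζ i) volume := by
        rw [hpiece i x]
        exact ((hint_f x).indicator (measurableSet_layer ζ i)).integrableOn
      simp only [sub_mul] at htr
      rw [integral_sub hib hip] at htr
      have hpint : ∫ y in layer ζ i, piece ζ f i y * G x y
          = ∫ y in layer ζ i, f y * G x y :=
        setIntegral_congr_fun (measurableSet_layer ζ i)
          (fun y hy => by simp [piece, Set.indicator_of_mem hy])
      have ihh := ih (i + 1) (by omega) (by omega) x hx'
      have hstep : ∫ y in layer ζ i, fbar i y * G x y
          = (∫ y in layer ζ i, f y * G x y)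
            + ∫ y in {y : ℝ × ℝ | ζ (i + 1) < y.2}, f y * G x y := by
        rw [← ihh, ← hpint]
        linear_combination -htr
      rw [hstep, hunion i x hζi]
  constructor
  · intro i h3 hiN x hx
    have hsub : i - 1 + 1 = i := by omega
    have hx2 : x.2 < ζ i := by
      have := hx.2
      rwa [hsub] at this
    exact key (N - i) i (by omega) (by omega) x hx2
  · intro x hx
    have hx2 : x.2 < ζ 2 := hx.2
    have hk := key (N - 2) 2 (by omega) le_rfl x hx2
    have hintp : Integrable (fun y => piece ζ f 1 y * G x y) := by
      rw [hpiece 1 x]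
      exact (hint_f x).indicator (measurableSet_layer ζ 1)
    have hsplit : ∫ y : ℝ × ℝ, (fbar 2 y + piece ζ f 1 y) * G x y
        = (∫ y : ℝ × ℝ, fbar 2 y * G x y) + ∫ y : ℝ × ℝ, piece ζ f 1 y * G x y := by
      simp only [add_mul]
      exact integral_add (hint_fbar 2 le_rfl hN x) hintp
    have e1 : ∫ y : ℝ × ℝ, piece ζ f 1 y * G x y = ∫ y in layer ζ 1, f y * G x y := by
      rw [hpiece 1 x, integral_indicator (measurableSet_layer ζ 1)]
    -- the whole-space integral of fbar 2 localizes to layer 2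
    have hclsub : closure (layer ζ 2) ⊆ {y : ℝ × ℝ | ζ 2 ≤ y.2 ∧ y.2 ≤ ζ 3} := by
      refine closure_minimal (fun y hy => ⟨hy.1.le, hy.2.le⟩) ?_
      have : {y : ℝ × ℝ | ζ 2 ≤ y.2 ∧ y.2 ≤ ζ 3} = Prod.snd ⁻¹' Set.Icc (ζ 2) (ζ 3) := rfl
      rw [this]
      exact isClosed_Icc.preimage continuous_snd
    have hae : closure (layer ζ 2) =ᵐ[volume] layer ζ 2 := by
      rw [MeasureTheory.ae_eq_set]
      constructor
      · refine measure_mono_null (fun y hy => ?_)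
          (measure_union_null (null_snd_eq (ζ 2)) (null_snd_eq (ζ 3)))
        have h1 := hclsub hy.1
        have h2 := hy.2
        by_cases hc : y.2 = ζ 2
        · exact Or.inl hc
        · refine Or.inr ?_
          have hlt : ζ 2 < y.2 := lt_of_le_of_ne h1.1 (Ne.symm hc)
          by_contra hc3
          exact h2 ⟨hlt, lt_of_le_of_ne h1.2 hc3⟩
      · have : layer ζ 2 \ closure (layer ζ 2) = ∅ :=
          Set.diff_eq_empty.mpr subset_closure
        rw [this]; exact measure_empty
    have e2 : ∫ y : ℝ × ℝ, fbar 2 y * G x y = ∫ y in layer ζ 2, fbar 2 y * G x y := by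
      have hzero : ∀ y : ℝ × ℝ, y ∉ closure (layer ζ 2) → fbar 2 y * G x y = 0 := by
        intro y hy
        have : fbar 2 y = 0 := by
          by_contra hne
          exact hy (hfbar_supp 2 le_rfl hN hne)
        rw [this, zero_mul]
      rw [← setIntegral_eq_integral_of_forall_compl_eq_zero hzero,
        setIntegral_congr_set hae]
    have hlast : ∫ y : ℝ × ℝ, f y * G x y
        = ∫ y in {y : ℝ × ℝ | ζ 1 < y.2}, f y * G x y := by
      refine (setIntegral_eq_integral_of_forall_compl_eq_zero (fun y hy => ?_)).symm
      have : f y = 0 := hf0_bot y (not_lt.mp hy)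
      rw [this, zero_mul]
    rw [hsplit, e1, e2, hk, hlast, add_comm]
    exact hunion 1 x (hζ 1 le_rfl (by omega))
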